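/- Let 0 < x < 1, 0 ≤ r < 1, θ ∈ ℝ, ψ ∈ ℝ, and let n₂ := (1/x, 0, 1) and n₃ := (e^{2ψi/3}/x, r·e^{iθ}·e^{−ψi/3}/√(1−r²), e^{−ψi/3}/√(1−r²)) in ℂ³. Then |⟨n₂,n₃⟩|² / (1/x² − 1)² = ((1−r²) − 2x²·√(1−r²)·cos ψ + x⁴) / ((1−x²)²·(1−r²)). (This quantity is N(L₂, g(L₂)), where g is the normalized loxodromic isometry with holonomy ψ translating the origin to r·e^{iθ}, and equals cosh²(ρ(L₂, g(L₂))/2) when it exceeds 1.) -/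

import Mathlib

open Complex Real

/-- The signature `(2,1)` Hermitian form on `ℂ³`. -/
noncomputable def herm (p q : ℂ × ℂ × ℂ) : ℂ :=
  p.1 * (starRingEnd ℂ) q.1 + p.2.1 * (starRingEnd ℂ) q.2.1 - p.2.2 * (starRingEnd ℂ) q.2.2

private lemma aux_prod (a b c d p m cC xx ss : ℂ) (hx : xx ≠ 0) (hs : ss ≠ 0)
    (h1 : a * b = 1) (h2 : c * d = 1) (h3 : a * d = m) (h4 : c * b = p)
    (hc : p + m = 2 * cC) :
    (a / xx ^ 2 - c / ss) * (b / xx ^ 2 - d / ss)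
      = (ss ^ 2 - 2 * xx ^ 2 * ss * cC + xx ^ 4) / (xx ^ 4 * ss ^ 2) := by
  have e : (a / xx ^ 2 - c / ss) * (b / xx ^ 2 - d / ss)
      = a * b / xx ^ 4 - (a * d + c * b) / (xx ^ 2 * ss) + c * d / ss ^ 2 := by ring
  have hmp : m + p = 2 * cC := by linear_combination hc
  rw [e, h1, h2, h3, h4, hmp,
    div_sub_div _ _ (pow_ne_zero 4 hx) (mul_ne_zero (pow_ne_zero 2 hx) hs),
    div_add_div _ _ (mul_ne_zero (pow_ne_zero 4 hx) (mul_ne_zero (pow_ne_zero 2 hx) hs))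
      (pow_ne_zero 2 hs),
    div_eq_div_iff (mul_ne_zero (mul_ne_zero (pow_ne_zero 4 hx)
        (mul_ne_zero (pow_ne_zero 2 hx) hs)) (pow_ne_zero 2 hs))
      (mul_ne_zero (pow_ne_zero 4 hx) (pow_ne_zero 2 hs))]
  ring

/-- The quantity `N(L₂, g(L₂))` for the normalized loxodromic with holonomy `ψ`
translating the origin to `r·e^{iθ}`. -/
theorem N_formula_for_holonomy
    (x r θ ψ : ℝ) (hx0 : 0 < x) (hx1 : x < 1) (hr0 : 0 ≤ r) (hr1 : r < 1)
    (n₂ n₃ : ℂ × ℂ × ℂ)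
    (hn₂ : n₂ = (((1 / x : ℝ) : ℂ), 0, 1))
    (hn₃ : n₃ = (Complex.exp (2 * ψ * Complex.I / 3) / (x : ℂ),
      (r : ℂ) * Complex.exp (θ * Complex.I) * Complex.exp (-(ψ * Complex.I) / 3) /
        ((Real.sqrt (1 - r ^ 2) : ℝ) : ℂ),
      Complex.exp (-(ψ * Complex.I) / 3) / ((Real.sqrt (1 - r ^ 2) : ℝ) : ℂ))) :
    ‖herm n₂ n₃‖ ^ 2 / (1 / x ^ 2 - 1) ^ 2
      = ((1 - r ^ 2) - 2 * x ^ 2 * Real.sqrt (1 - r ^ 2) * Real.cos ψ + x ^ 4) /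
        ((1 - x ^ 2) ^ 2 * (1 - r ^ 2)) := by
  subst hn₂ hn₃
  set s : ℝ := Real.sqrt (1 - r ^ 2) with hsdef
  have hr2 : (0:ℝ) < 1 - r ^ 2 := by nlinarith
  have hs0 : 0 < s := Real.sqrt_pos.2 hr2
  have hs2 : s ^ 2 = 1 - r ^ 2 := Real.sq_sqrt hr2.le
  have hxne : (x:ℂ) ≠ 0 := by exact_mod_cast hx0.ne'
  have hsne : (s:ℂ) ≠ 0 := by exact_mod_cast hs0.ne'
  have hz : herm (((1 / x : ℝ) : ℂ), 0, 1)
      (Complex.exp (2 * ψ * Complex.I / 3) / (x : ℂ),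
        (r : ℂ) * Complex.exp (θ * Complex.I) * Complex.exp (-(ψ * Complex.I) / 3) / (s : ℂ),
        Complex.exp (-(ψ * Complex.I) / 3) / (s : ℂ))
      = Complex.exp (-(2 * ψ * Complex.I / 3)) / (x : ℂ) ^ 2
        - Complex.exp (ψ * Complex.I / 3) / (s : ℂ) := by
    simp only [herm, map_div₀, ← Complex.exp_conj, map_mul, map_div₀, map_ofNat, map_neg,
      Complex.conj_I, Complex.conj_ofReal]
    push_cast
    field_simp
    ring_nf
  rw [hz]
  have habs : (‖Complex.exp (-(2 * ψ * Complex.I / 3)) / (x : ℂ) ^ 2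
        - Complex.exp (ψ * Complex.I / 3) / (s : ℂ)‖) ^ 2
      = (s ^ 2 - 2 * x ^ 2 * s * Real.cos ψ + x ^ 4) / (x ^ 4 * s ^ 2) := by
    have hc : (starRingEnd ℂ) (Complex.exp (-(2 * ψ * Complex.I / 3)) / (x : ℂ) ^ 2
          - Complex.exp (ψ * Complex.I / 3) / (s : ℂ))
        = Complex.exp (2 * ψ * Complex.I / 3) / (x : ℂ) ^ 2
          - Complex.exp (-((ψ:ℂ) * Complex.I / 3)) / (s : ℂ) := by
      simp only [map_sub, map_div₀, ← Complex.exp_conj, map_mul, map_ofNat, map_neg,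
        map_pow, Complex.conj_I, Complex.conj_ofReal]
      ring_nf
    have hcos : Complex.exp ((ψ:ℂ) * Complex.I) + Complex.exp (-(ψ:ℂ) * Complex.I)
        = 2 * (Real.cos ψ : ℂ) := by
      rw [Complex.ofReal_cos, ← Complex.two_cos]
    have he1 : Complex.exp (-(2 * (ψ:ℂ) * Complex.I / 3))
        * Complex.exp (2 * (ψ:ℂ) * Complex.I / 3) = 1 := by
      rw [← Complex.exp_add]; ring_nf; exact Complex.exp_zero
    have he2 : Complex.exp ((ψ:ℂ) * Complex.I / 3)
        * Complex.exp (-((ψ:ℂ) * Complex.I / 3)) = 1 := by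
      rw [← Complex.exp_add]; ring_nf; exact Complex.exp_zero
    have he3 : Complex.exp (-(2 * (ψ:ℂ) * Complex.I / 3))
        * Complex.exp (-((ψ:ℂ) * Complex.I / 3)) = Complex.exp (-(ψ:ℂ) * Complex.I) := by
      rw [← Complex.exp_add]; ring_nf
    have he4 : Complex.exp ((ψ:ℂ) * Complex.I / 3)
        * Complex.exp (2 * (ψ:ℂ) * Complex.I / 3) = Complex.exp ((ψ:ℂ) * Complex.I) := by
      rw [← Complex.exp_add]; ring_nf
    have h1 : ((‖Complex.exp (-(2 * ψ * Complex.I / 3)) / (x : ℂ) ^ 2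
          - Complex.exp (ψ * Complex.I / 3) / (s : ℂ)‖) ^ 2 : ℂ)
        = (((s ^ 2 - 2 * x ^ 2 * s * Real.cos ψ + x ^ 4) / (x ^ 4 * s ^ 2) : ℝ) : ℂ) := by
      rw [← Complex.ofReal_pow, Complex.sq_norm, ← Complex.mul_conj, hc]
      simp only [Complex.ofReal_div, Complex.ofReal_mul, Complex.ofReal_pow,
        Complex.ofReal_sub, Complex.ofReal_add, Complex.ofReal_ofNat]
      exact aux_prod _ _ _ _ _ _ _ _ _ hxne hsne he1 he2 he3 he4 hcos
    exact_mod_cast h1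
  rw [habs, ← hs2]
  have hx2 : (1:ℝ) - x ^ 2 ≠ 0 := by nlinarith
  field_simp
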